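/- If X is a Lindelöf topological space and F is a filter base on X stable under countable intersections, then F converges to its adherence ad(F) = ⋂{cl(F) : F ∈ F}, i.e., every open set containing ad(F) contains some member of F. -/
import Mathlib

open Set Topology

/-- A filter base on `X`: a nonempty family of subsets of `X`, not containing `∅`,
closed under pairwise intersections. -/
def FilterBaseOn (X : Type*) (F : Set (Set X)) : Prop :=
  F.Nonempty ∧ ∅ ∉ F ∧ ∀ A ∈ F, ∀ B ∈ F, A ∩ B ∈ F

/-- `F` converges to the set `W`: every open set containing `W` contains a member of `F`. -/
def ConvergesTo {X : Type*} [TopologicalSpace X] (F : Set (Set X)) (W : Set X) : Prop :=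
  ∀ U : Set X, IsOpen U → W ⊆ U → ∃ A ∈ F, A ⊆ U

/-- `F` is total: every filter base extending `F` has nonempty adherence
(intersection of the closures of all its members). -/
def TotalFB {X : Type*} [TopologicalSpace X] (F : Set (Set X)) : Prop :=
  ∀ H : Set (Set X), FilterBaseOn X H → F ⊆ H → (⋂ A ∈ H, closure A).Nonempty

/-- `F` is stable under countable intersections: every countable subfamily of `F`
has a member of `F` contained in its intersection. -/
def StableCI {X : Type*} (F : Set (Set X)) : Prop :=
  ∀ S ⊆ F, S.Countable → ∃ H ∈ F, H ⊆ ⋂₀ S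

/-- `F` is ω-closed: the intersection of any nonempty countable subfamily of `F` belongs to `F`. -/
def OmegaClosedFB {X : Type*} (F : Set (Set X)) : Prop :=
  ∀ S ⊆ F, S.Countable → S.Nonempty → ⋂₀ S ∈ F

/-- `F` is δ-stable: every nonempty countable subfamily of `F` has nonempty intersection. -/
def DeltaStableFB {X : Type*} (F : Set (Set X)) : Prop :=
  ∀ S ⊆ F, S.Countable → S.Nonempty → (⋂₀ S).Nonempty

/-- `G_δ(K)`: the family of Gδ subsets (countable intersections of open sets) containing `K`. -/
def GdeltaNbhds {X : Type*} [TopologicalSpace X] (K : Set X) : Set (Set X) :=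
  {G | K ⊆ G ∧ IsGδ G}

/-- `F ∨ G = {F₀ ∩ F₁ : F₀, F₁ ∈ F ∪ G}`. -/
def joinFB {X : Type*} (F G : Set (Set X)) : Set (Set X) :=
  {A | ∃ F₀ ∈ F ∪ G, ∃ F₁ ∈ F ∪ G, A = F₀ ∩ F₁}

/-- `X` is totally Lindelöf: every filter base stable under countable intersections
extends to a total filter base stable under countable intersections. -/
def TotallyLindelofSpace (X : Type*) [TopologicalSpace X] : Prop :=
  ∀ F : Set (Set X), FilterBaseOn X F → StableCI F →
    ∃ H : Set (Set X), FilterBaseOn X H ∧ StableCI H ∧ F ⊆ H ∧ TotalFB H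

/-- `X` is Alster: every cover of `X` by Gδ sets such that every compact subset of `X`
is contained in a single member admits a countable subcover. -/
def AlsterSpace (X : Type*) [TopologicalSpace X] : Prop :=
  ∀ 𝒢 : Set (Set X), (∀ G ∈ 𝒢, IsGδ G) → (∀ K : Set X, IsCompact K → ∃ G ∈ 𝒢, K ⊆ G) →
    ∃ 𝒞 ⊆ 𝒢, 𝒞.Countable ∧ ⋃₀ 𝒞 = Set.univ

/-- `D` is a discrete subset: each of its points has an open neighborhood meeting `D`
only in that point. -/
def IsDiscreteSubset {X : Type*} [TopologicalSpace X] (D : Set X) : Prop :=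
  ∀ a ∈ D, ∃ U : Set X, IsOpen U ∧ U ∩ D = {a}

/-- The first uncountable ordinal ω₁. -/
noncomputable def omega1 : Ordinal := (Cardinal.aleph 1).ord

theorem stmt6 {X : Type*} [TopologicalSpace X] [LindelofSpace X]
    (F : Set (Set X)) (hF : FilterBaseOn X F) (hS : StableCI F) :
    ConvergesTo F (⋂ A ∈ F, closure A) := by
  intro U hU hsub
  by_contra hcon
  push_neg at hcon
  -- every member of F meets Uᶜ
  have hmeet : ∀ A ∈ F, (A \ U).Nonempty := by
    intro A hA
    rcases Set.not_subset.mp (hcon A hA) with ⟨x, hx, hxU⟩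
    exact ⟨x, hx, hxU⟩
  -- the open cover by complements of closure A ∩ Uᶜ
  have hcover : univ ⊆ ⋃ A : F, ((closure (A : Set X)) ∩ Uᶜ)ᶜ := by
    intro x _
    by_contra hx
    simp only [mem_iUnion, not_exists, mem_compl_iff, not_not] at hx
    have hxall : x ∈ ⋂ A ∈ F, closure A := by
      refine mem_iInter₂.mpr fun A hA => (hx ⟨A, hA⟩).1
    rcases hF.1 with ⟨A₀, hA₀⟩
    exact (hx ⟨A₀, hA₀⟩).2 (hsub hxall)
  obtain ⟨t, htc, htcov⟩ := isLindelof_univ.elim_countable_subcover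
    (fun A : F => ((closure (A : Set X)) ∩ Uᶜ)ᶜ)
    (fun A => (isClosed_closure.inter hU.isClosed_compl).isOpen_compl) hcover
  -- S : countable subfamily of F
  set S : Set (Set X) := (fun A : F => (A : Set X)) '' t with hSdef
  have hSF : S ⊆ F := by rintro _ ⟨A, _, rfl⟩; exact A.2
  have hSc : S.Countable := htc.image _
  obtain ⟨H, hHF, hHS⟩ := hS S hSF hSc
  obtain ⟨x, hxH, hxU⟩ := hmeet H hHF
  have hxcov := htcov (mem_univ x)
  simp only [mem_iUnion] at hxcov
  obtain ⟨A, hAt, hxA⟩ := hxcov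
  have hxclA : x ∈ closure (A : Set X) := by
    have hxS : x ∈ ⋂₀ S := hHS hxH
    exact subset_closure (hxS _ ⟨A, hAt, rfl⟩)
  exact hxA ⟨hxclA, hxU⟩
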